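/- In the orthogonal setting, for all a, b ∈ V and every X ∈ gl(V)_B one has ⁅D_{a,b}, ⁅D_{a,b}, X⁆⁆ = B(a,b)·(D_{a,Xb} + D_{b,Xa}) − 2·B(a, X b)·D_{a,b} + B(a,a)·D_{Xb,b} + B(b,b)·D_{Xa,a}. -/
import Mathlib


/-- The endomorphism `D_{a,b} : x ↦ B(x,a)·b − B(x,b)·a` of the orthogonal setting. -/
def DOrth {k V : Type*} [Field k] [AddCommGroup V] [Module k V]
    (B : LinearMap.BilinForm k V) (a b : V) : Module.End k V :=
  (B.flip a).smulRight b - (B.flip b).smulRight a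

/-- In the orthogonal setting, for every `X ∈ gl(V)_B`:
`⁅D_{a,b}, ⁅D_{a,b}, X⁆⁆ = B(a,b)·(D_{a,Xb} + D_{b,Xa}) − 2·B(a,Xb)·D_{a,b}
  + B(a,a)·D_{Xb,b} + B(b,b)·D_{Xa,a}`. -/
theorem stmt12 {k V : Type*} [Field k] [AddCommGroup V] [Module k V]
    (hchar : (2 : k) ≠ 0)
    (B : LinearMap.BilinForm k V) (hsymm : ∀ u v : V, B u v = B v u) (a b : V) :
    ∀ X : Module.End k V, (∀ u v : V, B (X u) v = -B u (X v)) →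
      ⁅DOrth B a b, ⁅DOrth B a b, X⁆⁆ =
        B a b • (DOrth B a (X b) + DOrth B b (X a)) - (2 * B a (X b)) • DOrth B a b
          + B a a • DOrth B (X b) b + B b b • DOrth B (X a) a := by
  intro X hX
  have h1 : B a (X a) = 0 := by
    have := hX a a
    rw [hsymm (X a) a] at this
    have h2 : (2:k) * B a (X a) = 0 := by linear_combination this
    exact (mul_eq_zero.mp h2).resolve_left hchar
  have h2 : B b (X b) = 0 := by
    have := hX b b
    rw [hsymm (X b) b] at this
    have h2 : (2:k) * B b (X b) = 0 := by linear_combination this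
    exact (mul_eq_zero.mp h2).resolve_left hchar
  have h3 : B b (X a) = -B a (X b) := by
    have := hX a b; rw [hsymm (X a) b] at this; linear_combination this
  ext x
  simp only [Ring.lie_def, DOrth, LinearMap.sub_apply, LinearMap.add_apply, LinearMap.smul_apply,
    Module.End.mul_apply, LinearMap.smulRight_apply, map_sub, map_smul,
    map_add, smul_sub, smul_add, smul_smul]
  have hf : ∀ u v : V, B.flip u v = B v u := fun u v => LinearMap.flip_apply B v u
  simp only [hf]
  simp only [hX x, hX a, hX b, hsymm b a, hsymm (X a) x, hsymm (X b) x, h1, h2, h3]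
  module
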